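/- Let β ≤ α be nonzero ordinals with α infinite, X a nonempty set, and τ a nonempty family of subsets of X. If (X, τ) is [β, α]-compact, then (X, τ) is [β, α + 1]-compact (and hence [β, α + n]-compact for every n < ω). -/

import Mathlib

open Ordinal Set Cardinal

/-- The order type of a set of ordinals, under the induced order: the unique ordinal `o`
such that `S` with the induced order is order-isomorphic to `Set.Iio o`. -/
noncomputable def otype (S : Set Ordinal) : Ordinal :=
  sInf {o : Ordinal | Nonempty (S ≃o Set.Iio o)}

/-- `(X, τ)` is `[β, α]`-compact: every `α`-indexed cover of `X` by members of `τ`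
has a subcover indexed by a subset of `α` of order type `< β`. -/
def OrdCompact (β α : Ordinal) (X : Type*) (τ : Set (Set X)) : Prop :=
  ∀ O : Ordinal → Set X,
    (∀ δ < α, O δ ∈ τ) →
    (⋃ δ ∈ Set.Iio α, O δ) = Set.univ →
    ∃ H ⊆ Set.Iio α, otype H < β ∧ (⋃ δ ∈ H, O δ) = Set.univ

section OtypeLemmas

universe u

instance (priority := low) auxIsWellOrderLT (W : Type*) [LinearOrder W] [WellFoundedLT W] :
    IsWellOrder W (· < ·) := ⟨⟩

/-- Any linear well-order is order isomorphic to the initial segment of the ordinals given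
by its order type. -/
noncomputable def auxOrderIsoIioType (W : Type*) [LinearOrder W] [WellFoundedLT W] :
    W ≃o Set.Iio (Ordinal.type ((· < ·) : W → W → Prop)) :=
  StrictMono.orderIsoOfSurjective
    (fun x => ⟨Ordinal.typein ((· < ·) : W → W → Prop) x, Ordinal.typein_lt_type _ x⟩)
    (fun x y hxy => Subtype.mk_lt_mk.2 ((Ordinal.typein_lt_typein _).2 hxy))
    (fun o => by
      obtain ⟨a, ha⟩ := Ordinal.typein_surj ((· < ·) : W → W → Prop) o.2
      exact ⟨a, Subtype.ext ha⟩)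

/-- A strictly monotone map between initial segments of ordinals forces an inequality. -/
lemma aux_le_of_strictMono_Iio {a b : Ordinal} (f : Set.Iio a → Set.Iio b)
    (hf : StrictMono f) : a ≤ b := by
  by_contra hc
  push_neg at hc
  set g : Set.Iio a → Set.Iio a := fun x => ⟨(f x).1, (f x).2.trans hc⟩ with hg
  have hgmono : StrictMono g := fun x y hxy => Subtype.mk_lt_mk.2 (Subtype.coe_lt_coe.2 (hf hxy))
  have hle : (⟨b, hc⟩ : Set.Iio a) ≤ g ⟨b, hc⟩ := hgmono.le_apply
  have hlt : (g ⟨b, hc⟩ : Ordinal) < b := (f ⟨b, hc⟩).2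
  exact absurd (Subtype.coe_le_coe.2 hle) (not_le.2 hlt)

lemma otype_eq_of_iso {S : Set Ordinal.{u}} {o : Ordinal.{u}} (e : S ≃o Set.Iio o) :
    otype.{u, u} S = o := by
  have hset : {o' : Ordinal | Nonempty (S ≃o Set.Iio o')} = {o} := by
    ext o'
    simp only [Set.mem_setOf_eq, Set.mem_singleton_iff]
    constructor
    · rintro ⟨e'⟩
      have f : Set.Iio o ≃o Set.Iio o' := e.symm.trans e'
      exact le_antisymm
        (aux_le_of_strictMono_Iio f.symm f.symm.strictMono)
        (aux_le_of_strictMono_Iio f f.strictMono)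
    · rintro rfl
      exact ⟨e⟩
  rw [otype, hset, csInf_singleton]

lemma otype_nonempty_iso {γ : Ordinal.{u}} {S : Set Ordinal.{u}} (hS : S ⊆ Set.Iio γ) :
    Nonempty (S ≃o Set.Iio (otype.{u, u} S)) := by
  classical
  set m : S → γ.ToType := fun x => Ordinal.ToType.mk (o := γ) ⟨x.1, hS x.2⟩ with hm
  have hmmono : StrictMono m := by
    intro x y hxy
    exact (Ordinal.ToType.mk (o := γ)).strictMono (Subtype.mk_lt_mk.2 (Subtype.coe_lt_coe.2 hxy))
  have e1 : S ≃o Set.range m := hmmono.orderIso m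
  have e2 : Set.range m ≃o
      Set.Iio (Ordinal.type ((· < ·) : Set.range m → Set.range m → Prop)) :=
    auxOrderIsoIioType _
  have e3 : S ≃o Set.Iio (Ordinal.type ((· < ·) : Set.range m → Set.range m → Prop)) :=
    e1.trans e2
  have heq := otype_eq_of_iso e3
  rw [heq]
  exact ⟨e3⟩

lemma otype_mono {γ : Ordinal.{u}} {S T : Set Ordinal.{u}} (hST : S ⊆ T)
    (hT : T ⊆ Set.Iio γ) : otype.{u, u} S ≤ otype.{u, u} T := by
  obtain ⟨es⟩ := otype_nonempty_iso (hST.trans hT)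
  obtain ⟨et⟩ := otype_nonempty_iso hT
  refine aux_le_of_strictMono_Iio
    (fun x => et ⟨(es.symm x : Ordinal), hST (es.symm x).2⟩) ?_
  intro x y hxy
  exact et.strictMono (Subtype.mk_lt_mk.2 (Subtype.coe_lt_coe.2 (es.symm.strictMono hxy)))

lemma otype_image {γ : Ordinal.{u}} {S : Set Ordinal.{u}} (hS : S ⊆ Set.Iio γ)
    {f : Ordinal.{u} → Ordinal.{u}} (hf : StrictMonoOn f S) :
    otype.{u, u} (f '' S) = otype.{u, u} S := by
  obtain ⟨e⟩ := otype_nonempty_iso hS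
  exact otype_eq_of_iso ((StrictMonoOn.orderIso f S hf).symm.trans e)

lemma otype_ne_zero {γ : Ordinal.{u}} {B : Set Ordinal.{u}} (hne : B.Nonempty)
    (hB : B ⊆ Set.Iio γ) : otype.{u, u} B ≠ 0 := by
  obtain ⟨e⟩ := otype_nonempty_iso hB
  intro h0
  obtain ⟨b, hb⟩ := hne
  obtain ⟨c, hc⟩ : ∃ c : Ordinal, c < otype B := ⟨_, (e ⟨b, hb⟩).2⟩
  rw [h0] at hc
  simp at hc

lemma otype_singleton (a : Ordinal.{u}) : otype.{u, u} {a} = 1 := by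
  refine otype_eq_of_iso ⟨⟨fun _ => ⟨0, Set.mem_Iio.2 zero_lt_one⟩, fun _ => ⟨a, rfl⟩, ?_, ?_⟩, ?_⟩
  · intro x
    exact Subtype.ext (Set.mem_singleton_iff.1 x.2).symm
  · intro y
    exact Subtype.ext (Ordinal.lt_one_iff_zero.1 y.2).symm
  · intro x y
    have hx : (x : Ordinal) = a := Set.mem_singleton_iff.1 x.2
    have hy : (y : Ordinal) = a := Set.mem_singleton_iff.1 y.2
    have hxy : x = y := Subtype.ext (hx.trans hy.symm)
    simp [hxy]

lemma otype_union {γ : Ordinal.{u}} {A B : Set Ordinal.{u}} (hsep : ∀ a ∈ A, ∀ b ∈ B, a < b)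
    (hA : A ⊆ Set.Iio γ) (hB : B ⊆ Set.Iio γ) :
    otype.{u, u} (A ∪ B) = otype.{u, u} A + otype.{u, u} B := by
  classical
  obtain ⟨ea⟩ := otype_nonempty_iso hA
  obtain ⟨eb⟩ := otype_nonempty_iso hB
  set f : (A ∪ B : Set Ordinal) → Set.Iio (otype A + otype B) := fun x =>
    if hx : (x : Ordinal) ∈ A then
      ⟨(ea ⟨x, hx⟩ : Ordinal), Set.mem_Iio.2 (lt_of_lt_of_le (ea ⟨x, hx⟩).2 (le_self_add))⟩
    else
      ⟨otype A + (eb ⟨x, x.2.resolve_left hx⟩ : Ordinal),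
        Set.mem_Iio.2 ((add_lt_add_iff_left _).2
          (Set.mem_Iio.1 (eb ⟨x, x.2.resolve_left hx⟩).2))⟩ with hf
  have hfmono : StrictMono f := by
    intro x y hxy
    have hxy' : (x : Ordinal) < y := Subtype.coe_lt_coe.2 hxy
    by_cases hx : (x : Ordinal) ∈ A
    · by_cases hy : (y : Ordinal) ∈ A
      · simp only [hf, dif_pos hx, dif_pos hy]
        exact Subtype.mk_lt_mk.2
          (Subtype.coe_lt_coe.2 (ea.strictMono (Subtype.mk_lt_mk.2 hxy')))
      · simp only [hf, dif_pos hx, dif_neg hy]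
        exact Subtype.mk_lt_mk.2 (lt_of_lt_of_le (ea ⟨x, hx⟩).2 (le_self_add))
    · by_cases hy : (y : Ordinal) ∈ A
      · exact absurd (hsep _ hy _ (x.2.resolve_left hx)) (lt_asymm hxy')
      · simp only [hf, dif_neg hx, dif_neg hy]
        exact Subtype.mk_lt_mk.2 ((add_lt_add_iff_left _).2
          (Subtype.coe_lt_coe.2 (eb.strictMono (Subtype.mk_lt_mk.2 hxy'))))
  have hfsurj : Function.Surjective f := by
    intro c
    by_cases hc : (c : Ordinal) < otype A
    · set x := ea.symm ⟨(c : Ordinal), hc⟩ with hxdef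
      refine ⟨⟨x.1, Or.inl x.2⟩, ?_⟩
      have hmem : ((⟨x.1, Or.inl x.2⟩ : (A ∪ B : Set Ordinal)) : Ordinal) ∈ A := x.2
      simp only [hf, dif_pos hmem]
      have : (⟨x.1, hmem⟩ : A) = x := Subtype.ext rfl
      rw [this, hxdef, ea.apply_symm_apply]
    · push_neg at hc
      have hceq : otype A + ((c : Ordinal) - otype A) = c := Ordinal.add_sub_cancel_of_le hc
      have hd : (c : Ordinal) - otype A < otype B := by
        have := c.2
        rw [← hceq] at this
        exact (add_lt_add_iff_left _).1 (Set.mem_Iio.1 this)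
      set y := eb.symm ⟨(c : Ordinal) - otype A, hd⟩ with hydef
      refine ⟨⟨y.1, Or.inr y.2⟩, ?_⟩
      have hnA : ¬ ((⟨y.1, Or.inr y.2⟩ : (A ∪ B : Set Ordinal)) : Ordinal) ∈ A := by
        intro hmem
        exact absurd (hsep _ hmem _ y.2) (lt_irrefl _)
      simp only [hf, dif_neg hnA]
      refine Subtype.ext ?_
      have : (⟨(⟨y.1, Or.inr y.2⟩ : (A ∪ B : Set Ordinal)) , Or.resolve_left
        (⟨y.1, Or.inr y.2⟩ : (A ∪ B : Set Ordinal)).2 hnA⟩ : B) = y := Subtype.ext rfl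
      rw [this, hydef, eb.apply_symm_apply]
      exact hceq
  exact otype_eq_of_iso (StrictMono.orderIsoOfSurjective f hfmono hfsurj)

end OtypeLemmas

/-- The one-step version: `[β, α]`-compactness implies `[β, α + 1]`-compactness. -/
lemma ordCompact_step {β α : Ordinal} (hβα : β ≤ α) (hα : ω ≤ α)
    {X : Type*} {τ : Set (Set X)} (h : OrdCompact β α X τ) :
    OrdCompact β (α + 1) X τ := by
  classical
  intro O hO hcov
  have hα0 : (0 : Ordinal) < α := lt_of_lt_of_le Ordinal.omega0_pos hα
  have hαsucc : α < α + 1 := by simpa using (add_lt_add_left zero_lt_one α)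
  set g : Ordinal → Ordinal := fun δ => if δ = 0 then α else δ - 1 with hgdef
  have hglt : ∀ δ, δ < α → g δ < α + 1 := by
    intro δ hδ
    by_cases h0 : δ = 0
    · simp only [hgdef, if_pos h0]
      exact hαsucc
    · simp only [hgdef, if_neg h0]
      exact lt_of_le_of_lt (Ordinal.sub_le_self δ 1) (hδ.trans hαsucc)
  have hg_surj : ∀ η, η < α + 1 → ∃ δ, δ < α ∧ g δ = η := by
    intro η hη
    rw [Ordinal.add_one_eq_succ, Order.lt_succ_iff] at hη
    rcases eq_or_lt_of_le hη with heq | hlt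
    · exact ⟨0, hα0, by simp [hgdef, heq]⟩
    · refine ⟨1 + η, ?_, ?_⟩
      · rcases lt_or_ge η ω with hfin | hinf
        · obtain ⟨n, rfl⟩ := Ordinal.lt_omega0.1 hfin
          have : ((1 : Ordinal) + n) < ω := by
            rw [← Nat.cast_one, ← Nat.cast_add]
            exact Ordinal.nat_lt_omega0 _
          exact lt_of_lt_of_le this hα
        · rw [Ordinal.one_add_of_omega0_le hinf]
          exact hlt
      · have hne : (1 : Ordinal) + η ≠ 0 := by
          intro h0
          have : (1 : Ordinal) ≤ 1 + η := le_self_add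
          rw [h0] at this
          exact absurd this (by norm_num)
        simp only [hgdef, if_neg hne]
        exact Ordinal.add_sub_cancel 1 η
  -- apply [β, α]-compactness to the reshuffled cover
  obtain ⟨H₁, hH₁α, hH₁o, hH₁cov⟩ := h (fun δ => O (g δ))
    (fun δ hδ => hO _ (hglt δ hδ))
    (by
      apply Set.eq_univ_of_forall
      intro x
      have hx : x ∈ ⋃ δ ∈ Set.Iio (α + 1), O δ := by rw [hcov]; trivial
      rw [Set.mem_iUnion₂] at hx
      obtain ⟨η, hη, hxη⟩ := hx
      obtain ⟨δ, hδ, rfl⟩ := hg_surj η hη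
      exact Set.mem_iUnion₂.2 ⟨δ, hδ, hxη⟩)
  have hgmono : StrictMonoOn g {δ : Ordinal | δ ≠ 0} := by
    intro x hx y hy hxy
    simp only [Set.mem_setOf_eq] at hx hy
    simp only [hgdef, if_neg hx, if_neg hy]
    have h1x : (1 : Ordinal) ≤ x := Ordinal.one_le_iff_ne_zero.2 hx
    have h1y : (1 : Ordinal) ≤ y := Ordinal.one_le_iff_ne_zero.2 hy
    have hx' : 1 + (x - 1) = x := Ordinal.add_sub_cancel_of_le h1x
    have hy' : 1 + (y - 1) = y := Ordinal.add_sub_cancel_of_le h1y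
    rw [← add_lt_add_iff_left (1 : Ordinal), hx', hy']
    exact hxy
  by_cases h0 : (0 : Ordinal) ∈ H₁
  case neg =>
    -- α is not used: just shift the subcover back
    refine ⟨g '' H₁, ?_, ?_, ?_⟩
    · rintro _ ⟨δ, hδ, rfl⟩
      exact hglt δ (hH₁α hδ)
    · rw [otype_image hH₁α (hgmono.mono (fun x hx => by
        simp only [Set.mem_setOf_eq]
        rintro rfl
        exact h0 hx))]
      exact hH₁o
    · rw [Set.biUnion_image]
      exact hH₁cov
  case pos =>
    set S₁ : Set Ordinal := H₁ \ {0} with hS₁def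
    have hS₁sub : S₁ ⊆ Set.Iio α := (Set.diff_subset).trans hH₁α
    have hS₁ne : ∀ x ∈ S₁, x ≠ 0 := fun x hx => hx.2
    set T : Set Ordinal := g '' S₁ with hTdef
    have hTsub : T ⊆ Set.Iio α := by
      rintro _ ⟨δ, hδ, rfl⟩
      simp only [hgdef, if_neg (hS₁ne δ hδ)]
      exact lt_of_le_of_lt (Ordinal.sub_le_self δ 1) (hS₁sub hδ)
    have hotT : otype T = otype S₁ := otype_image hS₁sub (hgmono.mono hS₁ne)
    have hεβ : otype T < β := by
      rw [hotT]
      exact lt_of_le_of_lt (otype_mono Set.diff_subset hH₁α) hH₁o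
    obtain ⟨e⟩ := otype_nonempty_iso hTsub
    set ε : Ordinal := otype T with hεdef
    have hεα : ε < α := lt_of_lt_of_le hεβ hβα
    -- the second, rearranged cover
    set Q : Ordinal → Set X := fun δ =>
      if hδ : δ < ε then O ((e.symm ⟨δ, hδ⟩ : T) : Ordinal) else O α with hQdef
    have hQτ : ∀ δ, δ < α → Q δ ∈ τ := by
      intro δ hδ
      by_cases hδε : δ < ε
      · simp only [hQdef, dif_pos hδε]
        exact hO _ ((hTsub (e.symm ⟨δ, hδε⟩).2).trans hαsucc)
      · simp only [hQdef, dif_neg hδε]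
        exact hO _ hαsucc
    have hQcov : (⋃ δ ∈ Set.Iio α, Q δ) = Set.univ := by
      apply Set.eq_univ_of_forall
      intro x
      have hx : x ∈ ⋃ δ ∈ H₁, O (g δ) := by rw [hH₁cov]; trivial
      rw [Set.mem_iUnion₂] at hx
      obtain ⟨δ₁, hδ₁, hxδ⟩ := hx
      by_cases hδ0 : δ₁ = 0
      · refine Set.mem_iUnion₂.2 ⟨ε, hεα, ?_⟩
        simp only [hQdef, dif_neg (lt_irrefl ε)]
        rw [hδ0] at hxδ
        simpa only [hgdef, if_pos rfl] using hxδ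
      · have hmem : g δ₁ ∈ T := Set.mem_image_of_mem g ⟨hδ₁, hδ0⟩
        have hd : ((e ⟨g δ₁, hmem⟩ : Set.Iio ε) : Ordinal) < ε := (e ⟨g δ₁, hmem⟩).2
        refine Set.mem_iUnion₂.2 ⟨((e ⟨g δ₁, hmem⟩ : Set.Iio ε) : Ordinal),
          lt_trans hd hεα, ?_⟩
        simp only [hQdef]
        rw [dif_pos hd]
        have heq : e.symm ⟨((e ⟨g δ₁, hmem⟩ : Set.Iio ε) : Ordinal), hd⟩ = ⟨g δ₁, hmem⟩ := by
          show e.symm (e ⟨g δ₁, hmem⟩) = _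
          exact e.symm_apply_apply _
        rw [heq]
        exact hxδ
    obtain ⟨H₂, hH₂α, hH₂o, hH₂cov⟩ := h Q hQτ hQcov
    set f : Ordinal → Ordinal := fun δ =>
      if hδ : δ < ε then ((e.symm ⟨δ, hδ⟩ : T) : Ordinal) else δ with hfdef
    have hfmono : StrictMonoOn f (Set.Iio ε) := by
      intro x hx y hy hxy
      simp only [Set.mem_Iio] at hx hy
      simp only [hfdef, dif_pos hx, dif_pos hy]
      exact Subtype.coe_lt_coe.2 (e.symm.strictMono (Subtype.mk_lt_mk.2 hxy))
    have hfT : ∀ δ, δ < ε → f δ ∈ T := by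
      intro δ hδ
      simp only [hfdef, dif_pos hδ]
      exact (e.symm ⟨δ, hδ⟩).2
    have hQf : ∀ δ, δ < ε → Q δ = O (f δ) := by
      intro δ hδ
      simp only [hQdef, hfdef, dif_pos hδ]
    by_cases hB : (H₂ \ Set.Iio ε).Nonempty
    case pos =>
      set A : Set Ordinal := H₂ ∩ Set.Iio ε with hAdef
      have hAε : A ⊆ Set.Iio ε := Set.inter_subset_right
      have hfA : f '' A ⊆ Set.Iio α := fun x hx => by
        obtain ⟨δ, hδ, rfl⟩ := hx
        exact hTsub (hfT δ (hAε hδ))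
      refine ⟨f '' A ∪ {α}, ?_, ?_, ?_⟩
      · rintro x (hx | hx)
        · exact (hfA hx).trans hαsucc
        · rw [Set.mem_singleton_iff.1 hx]
          exact hαsucc
      · have hsep1 : ∀ a ∈ f '' A, ∀ b ∈ ({α} : Set Ordinal), a < b := by
          intro a ha b hb
          rw [Set.mem_singleton_iff.1 hb]
          exact hfA ha
        have h1 : otype (f '' A ∪ {α}) = otype (f '' A) + otype ({α} : Set Ordinal) :=
          otype_union hsep1 (fun x hx => (hfA hx).trans hαsucc)
            (fun x hx => by rw [Set.mem_singleton_iff.1 hx]; exact hαsucc)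
        have h2 : otype (f '' A) = otype A := otype_image hAε (hfmono.mono hAε)
        have h3 : otype ({α} : Set Ordinal) = 1 := otype_singleton α
        have hsep2 : ∀ a ∈ A, ∀ b ∈ H₂ \ Set.Iio ε, a < b := by
          intro a ha b hb
          exact lt_of_lt_of_le (hAε ha) (not_lt.1 hb.2)
        have hsplit : A ∪ (H₂ \ Set.Iio ε) = H₂ := Set.inter_union_diff H₂ (Set.Iio ε)
        have h4 : otype (A ∪ (H₂ \ Set.Iio ε)) = otype A + otype (H₂ \ Set.Iio ε) :=
          otype_union hsep2 ((Set.inter_subset_left).trans hH₂α)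
            ((Set.diff_subset).trans hH₂α)
        have h5 : (1 : Ordinal) ≤ otype (H₂ \ Set.Iio ε) :=
          Ordinal.one_le_iff_ne_zero.2 (otype_ne_zero hB ((Set.diff_subset).trans hH₂α))
        calc otype (f '' A ∪ {α}) = otype A + 1 := by rw [h1, h2, h3]
          _ ≤ otype A + otype (H₂ \ Set.Iio ε) := add_le_add_right h5 _
          _ = otype (A ∪ (H₂ \ Set.Iio ε)) := h4.symm
          _ = otype H₂ := by rw [hsplit]
          _ < β := hH₂o
      · apply Set.eq_univ_of_forall
        intro x
        have hx : x ∈ ⋃ δ ∈ H₂, Q δ := by rw [hH₂cov]; trivial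
        rw [Set.mem_iUnion₂] at hx
        obtain ⟨δ, hδ, hxδ⟩ := hx
        by_cases hδε : δ < ε
        · refine Set.mem_iUnion₂.2 ⟨f δ, Or.inl ⟨δ, ⟨hδ, hδε⟩, rfl⟩, ?_⟩
          rw [← hQf δ hδε]
          exact hxδ
        · refine Set.mem_iUnion₂.2 ⟨α, Or.inr rfl, ?_⟩
          simp only [hQdef, dif_neg hδε] at hxδ
          exact hxδ
    case neg =>
      have hH₂ε : H₂ ⊆ Set.Iio ε := by
        intro x hx
        by_contra hc
        exact hB ⟨x, hx, hc⟩
      refine ⟨f '' H₂, ?_, ?_, ?_⟩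
      · rintro _ ⟨δ, hδ, rfl⟩
        exact (hTsub (hfT δ (hH₂ε hδ))).trans hαsucc
      · rw [otype_image hH₂ε (hfmono.mono hH₂ε)]
        exact hH₂o
      · rw [Set.biUnion_image]
        rw [← hH₂cov]
        exact Set.iUnion₂_congr (fun δ hδ => (hQf δ (hH₂ε hδ)).symm)

/-- Corollary 2.7(1): if `β ≤ α` are nonzero ordinals with `α` infinite, then
`[β, α]`-compactness implies `[β, α + 1]`-compactness, hence `[β, α + n]`-compactness
for every `n < ω`. -/
theorem ordCompact_add_one {β α : Ordinal} (hβ : β ≠ 0) (hβα : β ≤ α) (hα : ω ≤ α)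
    {X : Type*} (hX : Nonempty X) {τ : Set (Set X)} (hτ : τ.Nonempty)
    (h : OrdCompact β α X τ) :
    OrdCompact β (α + 1) X τ ∧ ∀ n : ℕ, OrdCompact β (α + n) X τ := by
  refine ⟨ordCompact_step hβα hα h, ?_⟩
  intro n
  induction n with
  | zero => simpa using h
  | succ k ih =>
    have hstep : OrdCompact β ((α + k) + 1) X τ :=
      ordCompact_step (hβα.trans (le_self_add))
        (hα.trans (le_self_add)) ih
    have heq : α + ((k : Ordinal) + 1) = (α + (k : Ordinal)) + 1 := (add_assoc _ _ _).symm
    rw [show ((k + 1 : ℕ) : Ordinal) = (k : Ordinal) + 1 by push_cast; ring, heq]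
    exact hstep
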